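/- For all positive integers x, z, n with x < z, n divides φ((z^n − x^n)/(z − x)), where φ is Euler's totient function. -/
import Mathlib

/-- Monotonicity of `z^d - x^d` in `d`, over ℤ. -/
lemma int_pow_sub_pow_mono {x z : ℤ} (hx : 0 < x) (hxz : x < z) {d e : ℕ} (hde : d ≤ e) :
    z ^ d - x ^ d ≤ z ^ e - x ^ e := by
  have h0x : (0:ℤ) ≤ x := hx.le
  have h0z : (0:ℤ) ≤ z := hx.trans hxz |>.le
  have h1 : x ^ d * (x ^ (e - d) - 1) ≤ z ^ d * (z ^ (e - d) - 1) := by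
    apply mul_le_mul (pow_le_pow_left₀ h0x hxz.le d)
    · have := pow_le_pow_left₀ h0x hxz.le (e - d); linarith
    · have hx1 : (1:ℤ) ≤ x := hx
      have : (1:ℤ) ≤ x ^ (e - d) := one_le_pow₀ hx1
      linarith
    · positivity
  have hz : z ^ d * z ^ (e - d) = z ^ e := by rw [← pow_add]; congr 1; omega
  have hxe : x ^ d * x ^ (e - d) = x ^ e := by rw [← pow_add]; congr 1; omega
  nlinarith [h1]

/-- Coprime core case, `n ≥ 2`. -/
lemma key_coprime (a b n : ℕ) (ha : 0 < a) (hn : 2 ≤ n) (hab : a < b) (hco : Nat.Coprime a b) :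
    n ∣ Nat.totient ((b ^ n - a ^ n) / (b - a)) := by
  set Q := (b ^ n - a ^ n) / (b - a) with hQ
  have hdvd : b - a ∣ b ^ n - a ^ n := Nat.sub_dvd_pow_sub_pow b a n
  have hQmul : Q * (b - a) = b ^ n - a ^ n := Nat.div_mul_cancel hdvd
  have hb : 0 < b := ha.trans hab
  have hpowle : ∀ d : ℕ, a ^ d ≤ b ^ d := fun d => Nat.pow_le_pow_left hab.le d
  have hpowlt : ∀ d : ℕ, d ≠ 0 → a ^ d < b ^ d := fun d hd => Nat.pow_lt_pow_left hab hd
  have hQpos : 0 < Q := by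
    rcases Nat.eq_zero_or_pos Q with h | h
    · exfalso
      have := hQmul
      rw [h, zero_mul] at this
      have h2 := hpowlt n (by omega)
      omega
    · exact h
  have hQdvd : Q ∣ b ^ n - a ^ n := ⟨b - a, hQmul.symm⟩
  -- Q > b^(n-1) - a^(n-1)
  have hQgtZ : (b:ℤ) ^ (n-1) - (a:ℤ) ^ (n-1) < (Q:ℤ) := by
    have hax : (0:ℤ) < a := by exact_mod_cast ha
    have hbz : (a:ℤ) < b := by exact_mod_cast hab
    have hmul : (Q:ℤ) * ((b:ℤ) - a) = (b:ℤ)^n - (a:ℤ)^n := by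
      have h := hQmul
      zify [hab.le, hpowle n] at h
      linarith
    have hstrict : ((b:ℤ)^(n-1) - (a:ℤ)^(n-1)) * ((b:ℤ) - a) < (b:ℤ)^n - (a:ℤ)^n := by
      have hbn : (b:ℤ)^n = (b:ℤ)^(n-1) * b := by rw [← pow_succ]; congr 1; omega
      have han : (a:ℤ)^n = (a:ℤ)^(n-1) * a := by rw [← pow_succ]; congr 1; omega
      have h1 : (a:ℤ)^(n-1) < (b:ℤ)^(n-1) := by
        have := hpowlt (n-1) (by omega); exact_mod_cast this
      have h2 : (0:ℤ) < (a:ℤ)^(n-1) := by positivity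
      nlinarith
    have hba : (0:ℤ) < (b:ℤ) - a := by linarith
    have := hstrict.trans_eq hmul.symm
    exact lt_of_mul_lt_mul_right this hba.le
  -- Q coprime to a and b
  have hcoaQ : Nat.Coprime a Q := by
    have h : Nat.gcd a Q ∣ 1 := by
      have hd1 : Nat.gcd a Q ∣ a := Nat.gcd_dvd_left _ _
      have hd2 : Nat.gcd a Q ∣ b ^ n - a ^ n := (Nat.gcd_dvd_right a Q).trans hQdvd
      have hd3 : Nat.gcd a Q ∣ b ^ n := by
        have : b ^ n = (b ^ n - a ^ n) + a ^ n := (Nat.sub_add_cancel (hpowle n)).symm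
        rw [this]; exact Nat.dvd_add hd2 (hd1.trans (dvd_pow_self a (by omega)))
      have := Nat.dvd_gcd hd1 hd3
      rwa [Nat.Coprime.gcd_eq_one (hco.pow_right n)] at this
    exact Nat.dvd_one.mp h
  have hcobQ : Nat.Coprime b Q := by
    have h : Nat.gcd b Q ∣ 1 := by
      have hd1 : Nat.gcd b Q ∣ b := Nat.gcd_dvd_left _ _
      have hd2 : Nat.gcd b Q ∣ b ^ n - a ^ n := (Nat.gcd_dvd_right b Q).trans hQdvd
      have hd3 : Nat.gcd b Q ∣ a ^ n := by
        have : a ^ n = b ^ n - (b ^ n - a ^ n) := (Nat.sub_sub_self (hpowle n)).symm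
        rw [this]; exact Nat.dvd_sub (hd1.trans (dvd_pow_self b (by omega))) hd2
      have := Nat.dvd_gcd hd1 hd3
      rwa [Nat.Coprime.gcd_eq_one (hco.symm.pow_right n)] at this
    exact Nat.dvd_one.mp h
  haveI : NeZero Q := ⟨hQpos.ne'⟩
  set u : (ZMod Q)ˣ := ZMod.unitOfCoprime b hcobQ with hu
  set v : (ZMod Q)ˣ := ZMod.unitOfCoprime a hcoaQ with hv
  set w : (ZMod Q)ˣ := u * v⁻¹ with hw
  have hcast : ∀ d : ℕ, u ^ d = v ^ d ↔ Q ∣ b ^ d - a ^ d := by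
    intro d
    constructor
    · intro h
      have : ((u ^ d : (ZMod Q)ˣ) : ZMod Q) = ((v ^ d : (ZMod Q)ˣ) : ZMod Q) := by rw [h]
      simp only [Units.val_pow_eq_pow_val, hu, hv, ZMod.coe_unitOfCoprime] at this
      have h2 : ((b ^ d : ℕ) : ZMod Q) = ((a ^ d : ℕ) : ZMod Q) := by push_cast; exact this
      have h3 : b ^ d ≡ a ^ d [MOD Q] := (ZMod.natCast_eq_natCast_iff _ _ _).mp h2
      exact (Nat.modEq_iff_dvd' (hpowle d)).mp h3.symm
    · intro h
      have h3 : a ^ d ≡ b ^ d [MOD Q] := (Nat.modEq_iff_dvd' (hpowle d)).mpr h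
      have h2 : ((b ^ d : ℕ) : ZMod Q) = ((a ^ d : ℕ) : ZMod Q) :=
        (ZMod.natCast_eq_natCast_iff _ _ _).mpr h3.symm
      apply Units.ext
      simp only [Units.val_pow_eq_pow_val, hu, hv, ZMod.coe_unitOfCoprime]
      push_cast at h2
      exact h2
  have hwpow : ∀ d : ℕ, w ^ d = 1 ↔ u ^ d = v ^ d := by
    intro d
    rw [hw, mul_pow, inv_pow, mul_inv_eq_one]
  have hwn : w ^ n = 1 := (hwpow n).mpr ((hcast n).mpr hQdvd)
  have hord_dvd : orderOf w ∣ n := orderOf_dvd_of_pow_eq_one hwn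
  have hord_pos : 0 < orderOf w := orderOf_pos w
  have hord : orderOf w = n := by
    by_contra hne
    have hlt : orderOf w < n := lt_of_le_of_ne (Nat.le_of_dvd (by omega) hord_dvd) hne
    set d := orderOf w with hd
    have hwd : w ^ d = 1 := pow_orderOf_eq_one w
    have hQd : Q ∣ b ^ d - a ^ d := (hcast d).mp ((hwpow d).mp hwd)
    have hpos : 0 < b ^ d - a ^ d := by
      have := hpowlt d (by omega); omega
    have hle : Q ≤ b ^ d - a ^ d := Nat.le_of_dvd hpos hQd
    -- but b^d - a^d ≤ b^(n-1) - a^(n-1) < Q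
    have hmono : (b:ℤ) ^ d - (a:ℤ) ^ d ≤ (b:ℤ) ^ (n-1) - (a:ℤ) ^ (n-1) := by
      apply int_pow_sub_pow_mono (by exact_mod_cast ha) (by exact_mod_cast hab)
      omega
    have : ((b ^ d - a ^ d : ℕ) : ℤ) < (Q : ℤ) := by
      rw [Nat.cast_sub (hpowle d)]
      push_cast
      linarith
    have : b ^ d - a ^ d < Q := by exact_mod_cast this
    omega
  rw [← hord]
  calc orderOf w ∣ Fintype.card (ZMod Q)ˣ := orderOf_dvd_card
    _ = Nat.totient Q := ZMod.card_units_eq_totient Q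

theorem totient_pow_sub_pow_div_dvd (x z n : ℕ) (hx : 0 < x) (hn : 0 < n) (hxz : x < z) :
    n ∣ Nat.totient ((z ^ n - x ^ n) / (z - x)) := by
  rcases Nat.lt_or_ge n 2 with h1 | h2
  · interval_cases n
    · exact one_dvd _
  · set g := Nat.gcd x z with hg
    have hgpos : 0 < g := Nat.gcd_pos_of_pos_left z hx
    set a := x / g with ha
    set b := z / g with hb
    have hxa : g * a = x := Nat.mul_div_cancel' (Nat.gcd_dvd_left x z)
    have hzb : g * b = z := Nat.mul_div_cancel' (Nat.gcd_dvd_right x z)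
    have hapos : 0 < a := Nat.div_pos (Nat.le_of_dvd hx (Nat.gcd_dvd_left x z)) hgpos
    have hablt : a < b := Nat.div_lt_div_of_lt_of_dvd (Nat.gcd_dvd_right x z) hxz
    have hco : Nat.Coprime a b := Nat.coprime_div_gcd_div_gcd hgpos
    have hkey := key_coprime a b n hapos h2 hablt hco
    set Q' := (b ^ n - a ^ n) / (b - a) with hQ'
    set Q := (z ^ n - x ^ n) / (z - x) with hQ
    have hdvd' : b - a ∣ b ^ n - a ^ n := Nat.sub_dvd_pow_sub_pow b a n
    have hQ'mul : Q' * (b - a) = b ^ n - a ^ n := Nat.div_mul_cancel hdvd'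
    have hdvd : z - x ∣ z ^ n - x ^ n := Nat.sub_dvd_pow_sub_pow z x n
    have hQmul : Q * (z - x) = z ^ n - x ^ n := Nat.div_mul_cancel hdvd
    have hzx : z - x = g * (b - a) := by rw [← hxa, ← hzb, ← mul_tsub]
    have hzn : z ^ n - x ^ n = g ^ n * (b ^ n - a ^ n) := by
      rw [← hxa, ← hzb, mul_pow, mul_pow, ← mul_tsub]
    have hQeq : Q = g ^ (n - 1) * Q' := by
      have hzxpos : 0 < z - x := by omega
      apply Nat.eq_of_mul_eq_mul_right hzxpos
      rw [hQmul, hzn, hzx, ← hQ'mul]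
      have hgn : g ^ n = g ^ (n - 1) * g := by rw [← pow_succ]; congr 1; omega
      rw [hgn]; ring
    have hdvdQ : Q' ∣ Q := ⟨g ^ (n - 1), by rw [hQeq]; ring⟩
    exact hkey.trans (Nat.totient_dvd_of_dvd hdvdQ)
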